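/- Let M be an abelian group. The prime spectrum Spec ℂ[M] of the group algebra of M over the complex numbers is connected (as a topological space with the Zariski topology) if and only if M is torsion-free. -/

import Mathlib

/-- The old Mathlib definition (removed since): no nontrivial element has finite order. -/
def Monoid.IsTorsionFree (G : Type*) [Monoid G] : Prop :=
  ∀ g : G, g ≠ 1 → ¬IsOfFinOrder g

open MonoidAlgebra PrimeSpectrum

private lemma uniqueProds_of_torsionFree (M : Type*) [CommGroup M]
    (h : Monoid.IsTorsionFree M) : UniqueProds M := by
  have hA : IsAddTorsionFree (Additive M) := isAddTorsionFree_iff_not_isOfFinAddOrder.mpr <| by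
    intro a ha hfa
    exact h a.toMul (by simpa using ha) (isOfFinAddOrder_ofMul_iff.mp hfa)
  have hns : NoZeroSMulDivisors ℤ (Additive M) :=
    IsAddTorsionFree.to_noZeroSMulDivisors_int
  set A := Additive M
  set L := LocalizedModule (nonZeroDivisors ℤ) A with hL
  let F : AddHom A L := ⟨fun x => LocalizedModule.mk x 1, by
    intro x y
    rw [LocalizedModule.mk_add_mk]
    simp⟩
  have hinj : Function.Injective F := by
    intro x y hxy
    obtain ⟨u, hu⟩ := LocalizedModule.mk_eq.mp hxy
    simp only [one_smul] at hu
    exact smul_right_injective A (nonZeroDivisors.ne_zero u.2) hu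
  letI : Module ℚ L :=
    Module.compHom L (IsLocalization.algEquiv (nonZeroDivisors ℤ) ℚ
      (Localization (nonZeroDivisors ℤ))).toRingEquiv.toRingHom
  have hUL : UniqueSums L := inferInstance
  letI hU : UniqueSums A := UniqueSums.of_injective_addHom F hinj hUL
  exact (MulEquiv.multiplicativeAdditive M).uniqueProds_iff.mp inferInstance

private theorem connected_to_torsionFree (M : Type*) [CommGroup M]
    (hcon : ConnectedSpace (PrimeSpectrum (MonoidAlgebra ℂ M))) : Monoid.IsTorsionFree M := by
  classical
  by_contra htf
  obtain ⟨g, hg, hfin⟩ := by unfold Monoid.IsTorsionFree at htf; push_neg at htf; exact htf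
  set n := orderOf g with hn
  have hn0 : 0 < n := hfin.orderOf_pos
  have hn1 : 1 < n := by
    have hne1 : n ≠ 1 := fun h => hg (orderOf_eq_one_iff.mp (hn ▸ h))
    omega
  haveI : NeZero n := ⟨by omega⟩
  have hfn : (zmultiplesHom (Additive M)) (Additive.ofMul g) (n : ℤ) = 0 := by
    simp only [zmultiplesHom_apply, natCast_zsmul]
    rw [← ofMul_pow, pow_orderOf_eq_one]
    rfl
  set χ : ZMod n →+ Additive M :=
    ZMod.lift n ⟨(zmultiplesHom (Additive M)) (Additive.ofMul g), hfn⟩ with hχ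
  set c : ZMod n → M := fun k => (χ k).toMul with hc'
  have hcj : ∀ j : ℤ, c (j : ZMod n) = g ^ j := by
    intro j
    simp [hc', hχ, ZMod.lift_coe]
  have hc1 : ∀ k : ZMod n, c k = 1 ↔ k = 0 := by
    intro k
    obtain ⟨j, rfl⟩ := ZMod.intCast_surjective k
    rw [hcj, ZMod.intCast_zmod_eq_zero_iff_dvd, ← orderOf_dvd_iff_zpow_eq_one]
  have hcg : ∀ k : ZMod n, c k = g ↔ k = 1 := by
    intro k
    obtain ⟨j, rfl⟩ := ZMod.intCast_surjective k
    rw [hcj]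
    constructor
    · intro hgj
      have h1 : g ^ (j - 1) = 1 := by rw [zpow_sub, hgj]; simp
      have hdvd : (n : ℤ) ∣ j - 1 := orderOf_dvd_iff_zpow_eq_one.mpr h1
      have hz := (ZMod.intCast_zmod_eq_zero_iff_dvd (j - 1) n).mpr hdvd
      push_cast at hz
      exact sub_eq_zero.mp hz
    · intro hj
      have hz : ((j - 1 : ℤ) : ZMod n) = 0 := by push_cast [hj]; ring
      have h1 : g ^ (j - 1) = 1 :=
        orderOf_dvd_iff_zpow_eq_one.mp ((ZMod.intCast_zmod_eq_zero_iff_dvd (j - 1) n).mp hz)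
      calc g ^ j = g ^ (j - 1) * g ^ (1 : ℤ) := by rw [← zpow_add]; ring_nf
        _ = g := by rw [h1]; simp
  have hcadd : ∀ x k : ZMod n, c (x + k) = c x * c k := by
    intro x k
    simp [hc', map_add, toMul_add]
  set S : MonoidAlgebra ℂ M := ∑ k : ZMod n, MonoidAlgebra.of ℂ M (c k) with hS
  have key : ∀ x : ZMod n, MonoidAlgebra.of ℂ M (c x) * S = S := by
    intro x
    rw [hS, Finset.mul_sum]
    refine Fintype.sum_equiv (Equiv.addLeft x) _ _ fun k => ?_
    rw [← map_mul, ← hcadd]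
    rfl
  have hSS : S * S = (n : ℕ) • S := by
    rw [hS, Finset.sum_mul, ← hS]
    calc ∑ k : ZMod n, MonoidAlgebra.of ℂ M (c k) * S = ∑ _k : ZMod n, S :=
          Finset.sum_congr rfl fun k _ => key k
      _ = (n : ℕ) • S := by rw [Finset.sum_const, Finset.card_univ, ZMod.card]
  have hnC : (n : ℂ) ≠ 0 := Nat.cast_ne_zero.mpr (by omega)
  set e : MonoidAlgebra ℂ M := (n : ℂ)⁻¹ • S with he
  have hid : IsIdempotentElem e := by
    rw [IsIdempotentElem, he, smul_mul_smul_comm, hSS, ← Nat.cast_smul_eq_nsmul ℂ, smul_smul]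
    congr 1
    field_simp
  have hS1 : S.coeff 1 = 1 := by
    rw [hS, MonoidAlgebra.coeff_sum, Finsupp.finset_sum_apply]
    calc ∑ k : ZMod n, (MonoidAlgebra.of ℂ M (c k)).coeff 1
        = ∑ k : ZMod n, if k = 0 then (1 : ℂ) else 0 := by
          refine Finset.sum_congr rfl fun k _ => ?_
          rw [MonoidAlgebra.of_apply, MonoidAlgebra.coeff_single, Finsupp.single_apply]
          by_cases hk : k = 0
          · rw [if_pos ((hc1 k).mpr hk), if_pos hk]
          · rw [if_neg (fun h => hk ((hc1 k).mp h)), if_neg hk]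
      _ = 1 := by simp
  have hSg : S.coeff g = 1 := by
    rw [hS, MonoidAlgebra.coeff_sum, Finsupp.finset_sum_apply]
    calc ∑ k : ZMod n, (MonoidAlgebra.of ℂ M (c k)).coeff g
        = ∑ k : ZMod n, if k = 1 then (1 : ℂ) else 0 := by
          refine Finset.sum_congr rfl fun k _ => ?_
          rw [MonoidAlgebra.of_apply, MonoidAlgebra.coeff_single, Finsupp.single_apply]
          by_cases hk : k = 1
          · rw [if_pos ((hcg k).mpr hk), if_pos hk]
          · rw [if_neg (fun h => hk ((hcg k).mp h)), if_neg hk]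
      _ = 1 := by simp
  have he0 : e ≠ 0 := by
    intro h0
    have : e.coeff 1 = 0 := by rw [h0]; rfl
    rw [he, MonoidAlgebra.coeff_smul_apply, hS1] at this
    simp only [smul_eq_mul, mul_one] at this
    exact hnC (by simpa using inv_eq_zero.mp this)
  have he1 : e ≠ 1 := by
    intro h1
    have hgv : e.coeff g = 0 := by
      rw [h1, MonoidAlgebra.one_def, MonoidAlgebra.coeff_single, Finsupp.single_apply, if_neg (by exact fun h => hg h.symm)]
    rw [he, MonoidAlgebra.coeff_smul_apply, hSg] at hgv
    simp only [smul_eq_mul, mul_one] at hgv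
    exact hnC (by simpa using inv_eq_zero.mp hgv)
  -- basicOpen e is a nontrivial clopen
  have hclopen : IsClopen (basicOpen e : Set (PrimeSpectrum (MonoidAlgebra ℂ M))) :=
    PrimeSpectrum.isClopen_iff.mpr ⟨e, hid, rfl⟩
  rcases _root_.isClopen_iff.mp hclopen with hbot | htop
  · -- basicOpen e = ∅ : e nilpotent hence 0
    have : basicOpen e = ⊥ :=
      TopologicalSpace.Opens.ext (by rw [hbot, TopologicalSpace.Opens.coe_bot])
    obtain ⟨m, hm⟩ := (PrimeSpectrum.basicOpen_eq_bot_iff e).mp this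
    exact he0 (by calc e = e ^ (m + 1) := (hid.pow_succ_eq m).symm
      _ = e ^ m * e := pow_succ e m
      _ = 0 := by rw [hm, zero_mul])
  · -- basicOpen e = univ : 1 - e nilpotent hence e = 1
    have hz : PrimeSpectrum.zeroLocus {e} = (∅ : Set (PrimeSpectrum (MonoidAlgebra ℂ M))) := by
      have hb := PrimeSpectrum.basicOpen_eq_zeroLocus_compl e
      rw [htop] at hb
      rw [← compl_compl (PrimeSpectrum.zeroLocus {e}), ← hb, Set.compl_univ]
    have hcompl : (basicOpen (1 - e) : Set (PrimeSpectrum (MonoidAlgebra ℂ M))) = ∅ := by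
      rw [← PrimeSpectrum.zeroLocus_eq_basicOpen_of_isIdempotentElem e hid, hz]
    have hbot2 : basicOpen (1 - e) = ⊥ :=
      TopologicalSpace.Opens.ext (by rw [hcompl, TopologicalSpace.Opens.coe_bot])
    obtain ⟨m, hm⟩ := (PrimeSpectrum.basicOpen_eq_bot_iff (1 - e)).mp hbot2
    have h10 : 1 - e = 0 := by
      calc 1 - e = (1 - e) ^ (m + 1) := (hid.one_sub.pow_succ_eq m).symm
        _ = (1 - e) ^ m * (1 - e) := pow_succ _ m
        _ = 0 := by rw [hm, zero_mul]
    exact he1 (by linear_combination -h10)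

/-- For an abelian group `M`, the prime spectrum of the complex group algebra `ℂ[M]` is
connected if and only if `M` is torsion-free. -/
theorem primeSpectrum_monoidAlgebra_connected_iff (M : Type*) [CommGroup M] :
    ConnectedSpace (PrimeSpectrum (MonoidAlgebra ℂ M)) ↔ Monoid.IsTorsionFree M := by
  constructor
  · exact connected_to_torsionFree M
  · intro h
    letI := uniqueProds_of_torsionFree M h
    haveI : IsDomain (MonoidAlgebra ℂ M) := NoZeroDivisors.to_isDomain _
    infer_instance
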